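/- For n ≥ 1 and positive integer α, as a formal power series identity in x over ℚ(q): (Σ_{σ ∈ S_n} x^(des σ) q^((1 + des σ - lrmin σ)(α-1) + maj σ) [α]^(lrmin σ)) / (x;q)_{n+α} = Σ_{j≥0} x^j · qbinom(j+α, j+1) · [j+1]^n. -/

import Mathlib

open Finset

def pval {n : ℕ} (σ : Equiv.Perm (Fin n)) (i : ℕ) : ℕ :=
  if h : i < n then (σ ⟨i, h⟩ : ℕ) else 0

def desSet {n : ℕ} (σ : Equiv.Perm (Fin n)) : Finset ℕ :=
  (Finset.range (n - 1)).filter (fun i => pval σ (i + 1) < pval σ i)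

def des {n : ℕ} (σ : Equiv.Perm (Fin n)) : ℕ := (desSet σ).card

def maj {n : ℕ} (σ : Equiv.Perm (Fin n)) : ℕ := ∑ i ∈ desSet σ, (i + 1)

def lrmin {n : ℕ} (σ : Equiv.Perm (Fin n)) : ℕ :=
  ((Finset.range n).filter (fun i => ∀ j ∈ Finset.range i, pval σ i < pval σ j)).card

def rlmin {n : ℕ} (σ : Equiv.Perm (Fin n)) : ℕ :=
  ((Finset.range n).filter
    (fun i => ∀ j ∈ Finset.range n, i < j → pval σ i < pval σ j)).card

noncomputable section

abbrev K : Type := RatFunc ℚ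

def qq : K := RatFunc.X

def qint (m : ℕ) : K := ∑ i ∈ Finset.range m, qq ^ i

def qfact (m : ℕ) : K := ∏ i ∈ Finset.range m, qint (i + 1)

def qbinom (a b : ℕ) : K := qfact a / (qfact b * qfact (a - b))

def E (α β : ℕ) : ℕ → ℕ → K
  | 0, k => if k = 0 then 1 else 0
  | n + 1, 0 => qint β * E α β n 0
  | n + 1, k + 1 =>
      qq ^ (β + k) * qint (n - k + α) * E α β n k + qint (k + 1 + β) * E α β n (k + 1)

def poch (N : ℕ) : PowerSeries K :=
  ∏ i ∈ Finset.range N, (1 - PowerSeries.C (R := K) (qq ^ i) * PowerSeries.X)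

lemma qint_one : qint 1 = 1 := by simp [qint]

lemma qint_add (a b : ℕ) : qint (a + b) = qint a + qq ^ a * qint b := by
  simp [qint, Finset.sum_range_add, Finset.mul_sum, pow_add]

lemma qint_ne_zero {m : ℕ} (hm : 1 ≤ m) : qint m ≠ 0 := by
  have hq : qint m = algebraMap (Polynomial ℚ) K (∑ i ∈ Finset.range m, Polynomial.X ^ i) := by
    rw [map_sum]
    exact Finset.sum_congr rfl fun i _ => by rw [map_pow, RatFunc.algebraMap_X]; rfl
  rw [hq]
  intro h
  have h2 : (∑ i ∈ Finset.range m, (Polynomial.X : Polynomial ℚ) ^ i) = 0 :=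
    RatFunc.algebraMap_injective _ (by simpa using h)
  have h3 : ((∑ i ∈ Finset.range m, (Polynomial.X : Polynomial ℚ) ^ i)).coeff 0 = 1 := by
    rw [Polynomial.finset_sum_coeff, Finset.sum_eq_single 0]
    · simp
    · intro b _ hb; simp [Polynomial.coeff_X_pow, Ne.symm hb]
    · intro h; simp at h; omega
  rw [h2] at h3; simp at h3

lemma qfact_succ (m : ℕ) : qfact (m + 1) = qfact m * qint (m + 1) := by
  simp [qfact, Finset.prod_range_succ]

lemma qfact_ne_zero (m : ℕ) : qfact m ≠ 0 := by
  induction m with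
  | zero => simp [qfact]
  | succ k ih => rw [qfact_succ]; exact mul_ne_zero ih (qint_ne_zero (by omega))

lemma qbinom_eq {a b c : ℕ} (h : a = b + c) :
    qbinom a b = qfact a / (qfact b * qfact c) := by
  rw [qbinom, show a - b = c by omega]

lemma qbinom_zero (a : ℕ) : qbinom a 0 = 1 := by
  rw [qbinom_eq (show a = 0 + a by omega), show qfact 0 = 1 by simp [qfact], one_mul,
    div_self (qfact_ne_zero a)]

lemma qbinom_self (a : ℕ) : qbinom a a = 1 := by
  rw [qbinom_eq (show a = a + 0 by omega), show qfact 0 = 1 by simp [qfact], mul_one,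
    div_self (qfact_ne_zero a)]

-- q-Pascal used for inverse of poch
lemma q_pascal (j M : ℕ) :
    qbinom (j + 1 + (M + 1)) (j + 1) =
      qbinom (j + M + 1) (j + 1) + qq ^ (M + 1) * qbinom (j + M + 1) j := by
  rw [qbinom_eq (show j + 1 + (M+1) = (j+1) + (M+1) by omega),
      qbinom_eq (show j + M + 1 = (j+1) + M by omega),
      qbinom_eq (show j + M + 1 = j + (M+1) by omega),
      show j + 1 + (M + 1) = (j + M + 1) + 1 by omega,
      qfact_succ (j + M + 1), qfact_succ j, qfact_succ M,
      show j + M + 1 + 1 = (M+1) + (j+1) by omega, qint_add (M+1) (j+1)]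
  have h1 := qfact_ne_zero j
  have h2 := qfact_ne_zero M
  have h3 := qint_ne_zero (show 1 ≤ j + 1 by omega)
  have h4 := qint_ne_zero (show 1 ≤ M + 1 by omega)
  set A := qfact j
  set B := qfact M
  set F := qfact (j + M + 1)
  set u := qint (j + 1)
  set v := qint (M + 1)
  field_simp


lemma qscalar (s k c : ℕ) :
    qint (s + k + 2) * qint (k + c + 1) =
      qint (k + 1) * qint (s + (k + c) + 2) + qq ^ (k + 1) * qint c * qint (s + 1) := by
  have hrel : qint (k+1) + qq^(k+1) * qint (s+1) = qint (s+1) + qq^(s+1) * qint (k+1) := by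
    rw [← qint_add, ← qint_add, show (k+1)+(s+1) = (s+1)+(k+1) by omega]
  rw [show s + k + 2 = (k+1) + (s+1) by omega, qint_add (k+1) (s+1),
      show k + c + 1 = (k+1) + c by omega, qint_add (k+1) c,
      show s + (k+c) + 2 = ((k+1)+(s+1)) + c by omega, qint_add ((k+1)+(s+1)) c,
      qint_add (k+1) (s+1)]
  linear_combination (qq^(k+1) * qint c) * hrel

lemma qstar (s k c : ℕ) :
    qint (s + k + 2) * qbinom (s + 1 + (k + c)) (s + 1) =
      qint (k + 1) * qbinom (s + (k + c) + 2) (s + 1) +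
        qq ^ (k + 1) * qint c * qbinom (s + 1 + (k + c)) s := by
  have sc := qscalar s k c
  rw [qbinom_eq (show s + 1 + (k+c) = (s+1) + (k+c) by omega),
      qbinom_eq (show s + (k+c) + 2 = (s+1) + ((k+c)+1) by omega),
      qbinom_eq (show s + 1 + (k+c) = s + ((k+c)+1) by omega),
      show s + (k+c) + 2 = (s + 1 + (k+c)) + 1 by omega,
      qfact_succ (s + 1 + (k+c)), qfact_succ (k+c), qfact_succ s,
      show s + 1 + (k + c) + 1 = s + (k + c) + 2 by omega]
  have h1 := qfact_ne_zero s
  have h2 := qfact_ne_zero (k+c)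
  have h3 := qint_ne_zero (show 1 ≤ s+1 by omega)
  have h4 := qint_ne_zero (show 1 ≤ k+c+1 by omega)
  have h5 := qfact_ne_zero (s+1+(k+c))
  set A := qfact s with hAdef
  set u := qint (s+1) with hudef
  set B := qfact (k+c) with hBdef
  set v := qint (k+c+1) with hvdef
  set G := qfact (s+1+(k+c)) with hGdef
  set w := qint (s+(k+c)+2) with hwdef
  rw [mul_div_assoc', mul_div_assoc', mul_div_assoc',
      div_add_div _ _ (mul_ne_zero (mul_ne_zero h1 h3) (mul_ne_zero h2 h4))
        (mul_ne_zero h1 (mul_ne_zero h2 h4))]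
  rw [div_eq_div_iff (mul_ne_zero (mul_ne_zero h1 h3) h2)
      (mul_ne_zero (mul_ne_zero (mul_ne_zero h1 h3) (mul_ne_zero h2 h4))
        (mul_ne_zero h1 (mul_ne_zero h2 h4)))]
  linear_combination (G * A^2 * u * B^2 * v) * sc

lemma qb_base (j a : ℕ) :
    qbinom (j + (a + 1)) (j + 1) * qint (j + 1) = qint (a + 1) * qbinom (j + (a + 1)) j := by
  rw [qbinom_eq (show j + (a+1) = (j+1) + a by omega),
      qbinom_eq (show j + (a+1) = j + (a+1) by omega),
      qfact_succ j, qfact_succ a]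
  have h1 := qfact_ne_zero j
  have h2 := qfact_ne_zero a
  have h3 := qint_ne_zero (show 1 ≤ j+1 by omega)
  have h4 := qint_ne_zero (show 1 ≤ a+1 by omega)
  field_simp


lemma E_zero (α β k : ℕ) : E α β 0 k = if k = 0 then 1 else 0 := rfl
lemma E_succ_zero (α β n : ℕ) : E α β (n+1) 0 = qint β * E α β n 0 := rfl
lemma E_succ_succ (α β n k : ℕ) :
    E α β (n+1) (k+1) = qq ^ (β + k) * qint (n - k + α) * E α β n k
      + qint (k + 1 + β) * E α β n (k + 1) := rfl

lemma E_vanish (α β : ℕ) : ∀ n k, n < k → E α β n k = 0 := by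
  intro n
  induction n with
  | zero => intro k hk; rw [E_zero]; simp; omega
  | succ n ih =>
    intro k hk
    obtain ⟨k, rfl⟩ : ∃ k', k = k' + 1 := ⟨k - 1, by omega⟩
    rw [E_succ_succ, ih k (by omega), ih (k+1) (by omega)]
    simp

lemma qstar' (j k m α : ℕ) (hkj : k < j) (hkm : k ≤ m) :
    qint (j+1) * qbinom (j-k+m+α) (j-k) =
      qint (k+1) * qbinom (j-k+m+α+1) (j-k) +
        qq^(k+1) * qint (m-k+α) * qbinom (j-k+m+α) (j-k-1) := by
  have h := qstar (j-k-1) k (m-k+α)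
  rw [show j-k-1+k+2 = j+1 by omega, show j-k-1+1 = j-k by omega,
      show j-k-1+(k+(m-k+α))+2 = j-k+m+α+1 by omega] at h
  rw [show j - k + (k + (m - k + α)) = j - k + m + α by omega] at h
  exact h

lemma sum_step (α m j : ℕ) :
    ∑ k ∈ range (j+1), E α 1 (m+1) k * qbinom (j - k + (m+1) + α) (j - k) =
      qint (j+1) * ∑ k ∈ range (j+1), E α 1 m k * qbinom (j - k + m + α) (j - k) := by
  -- define A and B sums
  have hA : ∀ k, k ∈ range (j+1) → True := fun _ _ => trivial
  rw [Finset.mul_sum]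
  -- RHS per-term transformation
  have key : ∀ k ∈ range (j+1),
      qint (j+1) * (E α 1 m k * qbinom (j - k + m + α) (j - k)) =
        (qint (k+1) * E α 1 m k * qbinom (j - k + m + α + 1) (j - k)) +
        (if k < j then qq^(k+1) * qint (m - k + α) * E α 1 m k * qbinom (j - k + m + α) (j - k - 1) else 0) := by
    intro k hk
    simp only [mem_range] at hk
    by_cases hkj : k < j
    · rw [if_pos hkj]
      by_cases hkm : k ≤ m
      · have h := qstar' j k m α hkj hkm
        calc qint (j+1) * (E α 1 m k * qbinom (j - k + m + α) (j - k))
            = (qint (j+1) * qbinom (j-k+m+α) (j-k)) * E α 1 m k := by ring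
          _ = _ := by rw [h]; ring
      · rw [E_vanish α 1 m k (by omega)]; ring
    · have hkj' : k = j := by omega
      subst hkj'
      rw [if_neg hkj]
      simp only [Nat.sub_self]
      rw [qbinom_zero, qbinom_zero]
      ring
  rw [Finset.sum_congr rfl key, Finset.sum_add_distrib]
  -- second sum: drop the k = j term
  have h2 : ∑ k ∈ range (j+1), (if k < j then qq^(k+1) * qint (m - k + α) * E α 1 m k * qbinom (j - k + m + α) (j - k - 1) else 0)
      = ∑ k ∈ range j, qq^(k+1) * qint (m - k + α) * E α 1 m k * qbinom (j - k + m + α) (j - k - 1) := by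
    rw [Finset.sum_range_succ, if_neg (lt_irrefl j), add_zero]
    exact Finset.sum_congr rfl fun k hk => if_pos (mem_range.mp hk)
  rw [h2]
  -- LHS expansion
  rw [Finset.sum_range_succ' (fun k => E α 1 (m+1) k * qbinom (j - k + (m+1) + α) (j - k)) j]
  have hf0 : E α 1 (m+1) 0 * qbinom (j - 0 + (m+1) + α) (j - 0) =
      qint (0+1) * E α 1 m 0 * qbinom (j - 0 + m + α + 1) (j - 0) := by
    rw [E_succ_zero, qint_one, show j - 0 + (m+1) + α = j - 0 + m + α + 1 by omega]
  have hfk : ∀ k ∈ range j,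
      E α 1 (m+1) (k+1) * qbinom (j - (k+1) + (m+1) + α) (j - (k+1)) =
        qq^(k+1) * qint (m - k + α) * E α 1 m k * qbinom (j - k + m + α) (j - k - 1)
        + qint ((k+1)+1) * E α 1 m (k+1) * qbinom (j - (k+1) + m + α + 1) (j - (k+1)) := by
    intro k hk
    simp only [mem_range] at hk
    rw [E_succ_succ, show (1:ℕ) + k = k + 1 by omega, show k + 1 + 1 = (k+1)+1 by omega,
        show j - (k+1) + (m+1) + α = j - (k+1) + m + α + 1 by omega,
        show j - (k+1) = j - k - 1 by omega,
        show j - k - 1 + m + α + 1 = j - k + m + α by omega]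
    ring
  rw [Finset.sum_congr rfl hfk, Finset.sum_add_distrib, hf0,
      Finset.sum_range_succ' (fun k => qint (k+1) * E α 1 m k * qbinom (j - k + m + α + 1) (j - k)) j]
  ring


lemma key_id (α : ℕ) (hα : 1 ≤ α) : ∀ m j : ℕ,
    qbinom (j + α) (j + 1) * qint (j + 1) ^ (m + 1) =
      qint α * ∑ k ∈ range (j + 1), E α 1 m k * qbinom (j - k + m + α) (j - k) := by
  intro m
  induction m with
  | zero =>
    intro j
    have hs : ∑ k ∈ range (j + 1), E α 1 0 k * qbinom (j - k + 0 + α) (j - k)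
        = qbinom (j + α) j := by
      rw [Finset.sum_eq_single 0]
      · rw [E_zero]; simp
      · intro b _ hb; rw [E_zero, if_neg hb]; ring
      · intro h; simp at h
    rw [hs, pow_one]
    obtain ⟨a, rfl⟩ : ∃ a, α = a + 1 := ⟨α - 1, by omega⟩
    exact qb_base j a
  | succ m ih =>
    intro j
    rw [sum_step, pow_succ, ← mul_assoc, ih j]
    ring

def Gser (M : ℕ) : PowerSeries K := PowerSeries.mk fun j => qbinom (j + M - 1) j

lemma poch_mul_G : ∀ M : ℕ, 1 ≤ M → poch M * Gser M = 1 := by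
  intro M
  induction M with
  | zero => omega
  | succ M ih =>
    intro _
    by_cases hM : 1 ≤ M
    · have claim : (1 - PowerSeries.C (R := K) (qq ^ M) * PowerSeries.X) * Gser (M + 1) = Gser M := by
        ext j
        rw [sub_mul, one_mul, map_sub, mul_assoc, PowerSeries.coeff_C_mul]
        cases j with
        | zero =>
          simp only [PowerSeries.coeff_zero_X_mul, mul_zero, sub_zero, Gser, PowerSeries.coeff_mk]
          rw [show 0 + (M+1) - 1 = M by omega, show 0 + M - 1 = M - 1 by omega,
            qbinom_zero, qbinom_zero]
        | succ i =>
          simp only [PowerSeries.coeff_succ_X_mul, Gser, PowerSeries.coeff_mk]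
          have hp := q_pascal i (M - 1)
          rw [show M - 1 + 1 = M by omega, show i + (M-1) + 1 = i + M by omega] at hp
          rw [show i + 1 + (M + 1) - 1 = i + 1 + M by omega,
              show i + (M + 1) - 1 = i + M by omega,
              show i + 1 + M - 1 = i + M by omega]
          rw [show i + 1 + M = i + M + 1 by omega] at hp ⊢
          rw [hp]; ring
      rw [show M + 1 = M + 1 from rfl, poch, Finset.prod_range_succ, ← poch,
          mul_assoc, mul_comm (1 - PowerSeries.C (R := K) (qq ^ M) * PowerSeries.X) (Gser (M+1))]
      rw [show Gser (M+1) * (1 - PowerSeries.C (R := K) (qq ^ M) * PowerSeries.X)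
            = (1 - PowerSeries.C (R := K) (qq ^ M) * PowerSeries.X) * Gser (M+1) by ring, claim]
      exact ih hM
    · have hM0 : M = 0 := by omega
      subst hM0
      have h1 : poch 1 = 1 - PowerSeries.C (R := K) 1 * PowerSeries.X := by
        rw [poch, Finset.prod_range_one, pow_zero]
      ext j
      rw [h1, map_one (PowerSeries.C (R := K)), one_mul, sub_mul, one_mul, map_sub, PowerSeries.coeff_one]
      cases j with
      | zero =>
        simp only [PowerSeries.coeff_zero_X_mul, sub_zero, Gser, PowerSeries.coeff_mk]
        rw [show 0 + 1 - 1 = 0 by omega, qbinom_zero]; simp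
      | succ i =>
        simp only [PowerSeries.coeff_succ_X_mul, Gser, PowerSeries.coeff_mk]
        rw [show i + 1 + 1 - 1 = i + 1 by omega, show i + 1 - 1 = i by omega,
          qbinom_self, qbinom_self]
        simp

lemma poch_inv {M : ℕ} (hM : 1 ≤ M) : (poch M)⁻¹ = Gser M := by
  have h := poch_mul_G M hM
  have hc : PowerSeries.constantCoeff (R := K) (poch M) ≠ 0 := by
    intro h0
    have := congrArg (PowerSeries.constantCoeff (R := K)) h
    rw [map_mul, h0, zero_mul, map_one] at this
    exact zero_ne_one this
  rw [PowerSeries.inv_eq_iff_mul_eq_one hc]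
  rw [mul_comm] at h
  exact h


-- the insertion permutation
def ins {n : ℕ} (σ : Equiv.Perm (Fin n)) (p : Fin (n+1)) : Equiv.Perm (Fin (n+1)) :=
  ((finSuccEquiv' p).trans (Equiv.optionCongr σ)).trans (finSuccEquiv' (Fin.last n)).symm

lemma ins_self {n : ℕ} (σ : Equiv.Perm (Fin n)) (p : Fin (n+1)) : ins σ p p = Fin.last n := by
  simp [ins, finSuccEquiv'_at, finSuccEquiv'_symm_none]

lemma ins_succAbove {n : ℕ} (σ : Equiv.Perm (Fin n)) (p : Fin (n+1)) (j : Fin n) :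
    ins σ p (p.succAbove j) = (σ j).castSucc := by
  simp [ins, finSuccEquiv'_succAbove, finSuccEquiv'_symm_some, Fin.succAbove_last]

lemma pval_lt {n : ℕ} (σ : Equiv.Perm (Fin n)) {i : ℕ} (h : i < n) : pval σ i < n := by
  rw [pval, dif_pos h]; exact (σ ⟨i, h⟩).isLt

lemma pval_ins {n : ℕ} (σ : Equiv.Perm (Fin n)) (p : Fin (n+1)) {i : ℕ} (hi : i ≤ n) :
    pval (ins σ p) i =
      if i < (p : ℕ) then pval σ i else if i = (p : ℕ) then n else pval σ (i - 1) := by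
  have hi1 : i < n + 1 := by omega
  rcases lt_trichotomy i (p : ℕ) with hc | hc | hc
  · rw [if_pos hc]
    have hin : i < n := by have := p.isLt; omega
    have : (⟨i, hi1⟩ : Fin (n+1)) = p.succAbove ⟨i, hin⟩ := by
      rw [Fin.succAbove_of_castSucc_lt]
      · rfl
      · rw [Fin.lt_def]; exact hc
    rw [pval, dif_pos hi1]
    conv_lhs => rw [this, ins_succAbove]
    rw [pval, dif_pos hin]
    rfl
  · rw [if_neg (by omega), if_pos hc]
    have : (⟨i, hi1⟩ : Fin (n+1)) = p := by apply Fin.ext; exact hc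
    rw [pval, dif_pos hi1, this, ins_self]
    rfl
  · rw [if_neg (by omega), if_neg (by omega)]
    have hi0 : 1 ≤ i := by omega
    have him : i - 1 < n := by omega
    have : (⟨i, hi1⟩ : Fin (n+1)) = p.succAbove ⟨i - 1, him⟩ := by
      rw [Fin.succAbove_of_le_castSucc]
      · apply Fin.ext; simp [Fin.succ]; omega
      · rw [Fin.le_def]; simp; omega
    rw [pval, dif_pos hi1]
    conv_lhs => rw [this, ins_succAbove]
    rw [pval, dif_pos him]
    rfl


lemma pval_ins_lt {n : ℕ} (σ : Equiv.Perm (Fin n)) (p : Fin (n+1)) {i : ℕ} (hc : i < (p:ℕ)) :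
    pval (ins σ p) i = pval σ i := by
  have := p.isLt
  rw [pval_ins σ p (by omega), if_pos hc]

lemma pval_ins_eq {n : ℕ} (σ : Equiv.Perm (Fin n)) (p : Fin (n+1)) :
    pval (ins σ p) (p:ℕ) = n := by
  have := p.isLt
  rw [pval_ins σ p (by omega), if_neg (by omega), if_pos rfl]

lemma pval_ins_gt {n : ℕ} (σ : Equiv.Perm (Fin n)) (p : Fin (n+1)) {i : ℕ} (hc : (p:ℕ) < i)
    (hi : i ≤ n) : pval (ins σ p) i = pval σ (i - 1) := by
  rw [pval_ins σ p hi, if_neg (by omega), if_neg (by omega)]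

lemma mem_desSet {n : ℕ} (σ : Equiv.Perm (Fin n)) (i : ℕ) :
    i ∈ desSet σ ↔ i < n - 1 ∧ pval σ (i + 1) < pval σ i := by
  simp [desSet, Finset.mem_filter, Finset.mem_range]

lemma desSet_ins {n : ℕ} (σ : Equiv.Perm (Fin n)) (p : Fin (n+1)) :
    desSet (ins σ p) =
      ((desSet σ).filter (fun i => i + 1 < (p:ℕ))) ∪
      (((desSet σ).filter (fun i => (p:ℕ) ≤ i)).image (· + 1)) ∪
      (if (p:ℕ) < n then {(p:ℕ)} else ∅) := by
  have hp := p.isLt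
  ext i
  rw [mem_desSet]
  simp only [Finset.mem_union, Finset.mem_filter, Finset.mem_image, mem_desSet]
  constructor
  · rintro ⟨hilt, hlt⟩
    have hin : i < n := by omega
    rcases lt_trichotomy (i+1) (p:ℕ) with hc | hc | hc
    · left; left
      rw [pval_ins_lt σ p hc, pval_ins_lt σ p (by omega)] at hlt
      exact ⟨⟨by omega, hlt⟩, hc⟩
    · exfalso
      rw [hc, pval_ins_eq σ p, pval_ins_lt σ p (by omega)] at hlt
      have := pval_lt σ (show i < n by omega)
      omega
    · by_cases hip : i = (p:ℕ)
      · right; simp only [if_pos (show (p:ℕ) < n by omega), Finset.mem_singleton]; omega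
      · left; right
        refine ⟨i - 1, ⟨⟨by omega, ?_⟩, by omega⟩, by omega⟩
        rw [pval_ins_gt σ p (by omega) (by omega), pval_ins_gt σ p (by omega) (by omega)] at hlt
        rw [show i + 1 - 1 = i - 1 + 1 by omega] at hlt
        exact hlt
  · intro h
    rcases h with (⟨⟨hd, hlt⟩, hip⟩ | ⟨a, ⟨⟨had, halt⟩, hap⟩, hai⟩) | hthird
    · refine ⟨by omega, ?_⟩
      rw [pval_ins_lt σ p (by omega), pval_ins_lt σ p (by omega)]
      exact hlt
    · subst hai
      refine ⟨by omega, ?_⟩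
      rw [pval_ins_gt σ p (by omega) (by omega), pval_ins_gt σ p (by omega) (by omega)]
      rw [show a + 1 - 1 = a by omega, show a + 1 + 1 - 1 = a + 1 by omega]
      exact halt
    · by_cases hpn : (p:ℕ) < n
      · rw [if_pos hpn, Finset.mem_singleton] at hthird
        subst hthird
        refine ⟨by omega, ?_⟩
        rw [pval_ins_eq σ p, pval_ins_gt σ p (by omega) (by omega)]
        rw [show (p:ℕ) + 1 - 1 = (p:ℕ) by omega]
        exact pval_lt σ hpn
      · rw [if_neg hpn] at hthird; simp at hthird

lemma mem_lrset {n : ℕ} (σ : Equiv.Perm (Fin n)) (i : ℕ) :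
    i ∈ (Finset.range n).filter (fun i => ∀ j ∈ Finset.range i, pval σ i < pval σ j) ↔
      i < n ∧ ∀ j < i, pval σ i < pval σ j := by
  simp [Finset.mem_filter, Finset.mem_range]

lemma lrset_ins {n : ℕ} (σ : Equiv.Perm (Fin n)) (p : Fin (n+1)) :
    (Finset.range (n+1)).filter
        (fun i => ∀ j ∈ Finset.range i, pval (ins σ p) i < pval (ins σ p) j) =
      (((Finset.range n).filter (fun i => ∀ j ∈ Finset.range i, pval σ i < pval σ j)).image
        (fun i => if i < (p:ℕ) then i else i + 1)) ∪
      (if (p:ℕ) = 0 then {0} else ∅) := by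
  have hp := p.isLt
  ext i
  rw [mem_lrset]
  simp only [Finset.mem_union, Finset.mem_image, mem_lrset]
  constructor
  · rintro ⟨hin, hmin⟩
    rcases lt_trichotomy i (p:ℕ) with hc | hc | hc
    · left
      refine ⟨i, ⟨by omega, fun j hj => ?_⟩, by rw [if_pos hc]⟩
      have := hmin j hj
      rw [pval_ins_lt σ p hc, pval_ins_lt σ p (by omega)] at this
      exact this
    · right
      have hp0 : (p:ℕ) = 0 := by
        by_contra hne
        have := hmin 0 (by omega)
        rw [hc, pval_ins_eq σ p, pval_ins_lt σ p (by omega)] at this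
        have := pval_lt σ (show 0 < n by omega); omega
      simp only [if_pos hp0, Finset.mem_singleton]; omega
    · left
      refine ⟨i - 1, ⟨by omega, fun j hj => ?_⟩, by rw [if_neg (by omega)]; omega⟩
      by_cases hjp : j < (p:ℕ)
      · have := hmin j (by omega)
        rw [pval_ins_lt σ p hjp, pval_ins_gt σ p (by omega) (by omega)] at this
        exact this
      · have := hmin (j+1) (by omega)
        rw [pval_ins_gt σ p (by omega) (by omega),
          pval_ins_gt σ p (by omega) (by omega)] at this
        rw [show j + 1 - 1 = j by omega] at this
        exact this
  · intro h
    rcases h with ⟨a, ⟨han, hamin⟩, hai⟩ | hp0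
    · by_cases hap : a < (p:ℕ)
      · rw [if_pos hap] at hai
        subst hai
        refine ⟨by omega, fun j hj => ?_⟩
        rw [pval_ins_lt σ p hap, pval_ins_lt σ p (by omega)]
        exact hamin j hj
      · rw [if_neg hap] at hai
        subst hai
        refine ⟨by omega, fun j hj => ?_⟩
        rw [pval_ins_gt σ p (by omega) (by omega), show a + 1 - 1 = a by omega]
        by_cases hjp : j < (p:ℕ)
        · rw [pval_ins_lt σ p hjp]
          exact hamin j (by omega)
        · by_cases hjp2 : j = (p:ℕ)
          · rw [hjp2, pval_ins_eq σ p]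
            exact pval_lt σ (by omega)
          · rw [pval_ins_gt σ p (by omega) (by omega)]
            exact hamin (j-1) (by omega)
    · by_cases hpz : (p:ℕ) = 0
      · rw [if_pos hpz, Finset.mem_singleton] at hp0
        subst hp0
        exact ⟨by omega, fun j hj => by omega⟩
      · rw [if_neg hpz] at hp0; simp at hp0


-- rank sum lemma
lemma rank_sum {M : Type*} [AddCommMonoid M] (s : Finset ℕ) (f : ℕ → M) :
    ∑ d ∈ s, f ((s.filter (· < d)).card) = ∑ t ∈ Finset.range s.card, f t := by
  induction s using Finset.induction_on_max with
  | empty => simp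
  | insert a s ha ih =>
    have hans : a ∉ s := fun h => lt_irrefl a (ha a h)
    rw [Finset.sum_insert hans, Finset.card_insert_of_notMem hans, Finset.sum_range_succ]
    have h1 : (insert a s).filter (· < a) = s := by
      ext x
      simp only [Finset.mem_filter, Finset.mem_insert]
      constructor
      · rintro ⟨h | h, hx⟩
        · omega
        · exact h
      · intro hx; exact ⟨Or.inr hx, ha x hx⟩
    have h2 : ∀ d ∈ s, (insert a s).filter (· < d) = s.filter (· < d) := by
      intro d hd
      ext x
      simp only [Finset.mem_filter, Finset.mem_insert]
      constructor
      · rintro ⟨h | h, hx⟩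
        · exfalso; have := ha d hd; omega
        · exact ⟨h, hx⟩
      · rintro ⟨h, hx⟩; exact ⟨Or.inr h, hx⟩
    rw [h1, Finset.sum_congr rfl (fun d hd => by rw [h2 d hd]), ih]
    exact add_comm _ _

-- rank identity for the complement set
lemma rank_B {n : ℕ} (D : Finset ℕ) (hD : D ⊆ Finset.range (n-1)) {p : ℕ}
    (hp : p ∈ Finset.range n \ D.image (· + 1)) :
    p + (D.filter (fun i => p ≤ i)).card =
      D.card + (((Finset.range n \ D.image (· + 1))).filter (· < p)).card := by
  have hpn : p < n := by
    have := Finset.mem_sdiff.mp hp; exact Finset.mem_range.mp this.1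
  have hpni : ∀ d ∈ D, d + 1 ≠ p := by
    intro d hd heq
    have := Finset.mem_sdiff.mp hp
    exact this.2 (Finset.mem_image.mpr ⟨d, hd, heq⟩)
  -- partition of range p
  have hpart : (Finset.range p) =
      ((Finset.range n \ D.image (· + 1)).filter (· < p)) ∪
      ((D.image (· + 1)).filter (· < p)) := by
    ext x
    simp only [Finset.mem_union, Finset.mem_filter, Finset.mem_sdiff, Finset.mem_range]
    constructor
    · intro hx
      by_cases hxD : x ∈ D.image (· + 1)
      · exact Or.inr ⟨hxD, hx⟩
      · exact Or.inl ⟨⟨by omega, hxD⟩, hx⟩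
    · rintro (⟨⟨h, _⟩, hx⟩ | ⟨_, hx⟩) <;> omega
  have hdisj : Disjoint ((Finset.range n \ D.image (· + 1)).filter (· < p))
      ((D.image (· + 1)).filter (· < p)) := by
    rw [Finset.disjoint_left]
    intro x hx hx2
    have := (Finset.mem_filter.mp hx).1
    exact (Finset.mem_sdiff.mp this).2 (Finset.mem_filter.mp hx2).1
  have hcard : p = ((Finset.range n \ D.image (· + 1)).filter (· < p)).card +
      ((D.image (· + 1)).filter (· < p)).card := by
    rw [← Finset.card_union_of_disjoint hdisj, ← hpart, Finset.card_range]
  -- image filter card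
  have himg : ((D.image (· + 1)).filter (· < p)) = (D.filter (· < p)).image (· + 1) := by
    ext x
    simp only [Finset.mem_filter, Finset.mem_image]
    constructor
    · rintro ⟨⟨a, ha, rfl⟩, hx⟩
      have hx' : a + 1 < p := hx
      exact ⟨a, ⟨ha, by omega⟩, rfl⟩
    · rintro ⟨a, ⟨ha, hax⟩, rfl⟩
      refine ⟨⟨a, ha, rfl⟩, ?_⟩
      have := hpni a ha
      show a + 1 < p
      omega
  have hinj : Function.Injective (· + 1 : ℕ → ℕ) := add_left_injective 1
  have hsplit := Finset.card_filter_add_card_filter_not (s := D) (p := (· < p))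
  have heqf : D.filter (fun a => ¬ a < p) = D.filter (fun i => p ≤ i) := by
    apply Finset.filter_congr
    intro x _
    simp [not_lt]
  rw [heqf] at hsplit
  rw [himg, Finset.card_image_of_injective _ hinj] at hcard
  omega

-- bijectivity of insertion
lemma ins_bijective (n : ℕ) :
    Function.Bijective (fun x : Equiv.Perm (Fin n) × Fin (n+1) => ins x.1 x.2) := by
  rw [Fintype.bijective_iff_injective_and_card]
  constructor
  · rintro ⟨σ, p⟩ ⟨σ', p'⟩ h
    simp only at h
    have hpp : p = p' := by
      by_contra hne
      obtain ⟨j, hj⟩ := Fin.exists_succAbove_eq hne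
      have h1 : ins σ p p = Fin.last n := ins_self σ p
      have h2 : ins σ' p' p = (σ' j).castSucc := by rw [← hj, ins_succAbove]
      rw [h] at h1; rw [h1] at h2
      exact absurd h2.symm (Fin.ne_last_of_lt (Fin.castSucc_lt_last (σ' j)))
    subst hpp
    have hσ : σ = σ' := by
      apply Equiv.ext
      intro j
      have h1 : ins σ p (p.succAbove j) = (σ j).castSucc := ins_succAbove σ p j
      have h2 : ins σ' p (p.succAbove j) = (σ' j).castSucc := ins_succAbove σ' p j
      rw [h] at h1
      rw [h1] at h2
      exact Fin.castSucc_injective n h2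
    rw [hσ]
  · rw [Fintype.card_prod, Fintype.card_perm, Fintype.card_perm, Fintype.card_fin,
      Fintype.card_fin, Nat.factorial_succ, mul_comm]


lemma lrmin_ins {n : ℕ} (σ : Equiv.Perm (Fin n)) (p : Fin (n+1)) :
    lrmin (ins σ p) = lrmin σ + (if (p:ℕ) = 0 then 1 else 0) := by
  have hinj : Function.Injective (fun i => if i < (p:ℕ) then i else i + 1) := by
    intro a b h
    simp only at h
    split_ifs at h <;> omega
  have hl : lrmin (ins σ p) = ((Finset.range (n+1)).filter
      (fun i => ∀ j ∈ Finset.range i, pval (ins σ p) i < pval (ins σ p) j)).card := by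
    rfl
  rw [hl, lrset_ins]
  by_cases hp0 : (p:ℕ) = 0
  · rw [if_pos hp0, if_pos hp0]
    rw [Finset.card_union_of_disjoint, Finset.card_image_of_injective _ hinj,
      Finset.card_singleton]
    · rfl
    · rw [Finset.disjoint_right]
      intro x hx hx2
      rw [Finset.mem_singleton] at hx
      obtain ⟨a, _, ha⟩ := Finset.mem_image.mp hx2
      rw [hp0] at ha
      simp only [Nat.not_lt_zero, if_false] at ha
      omega
  · rw [if_neg hp0, if_neg hp0, Finset.union_empty,
      Finset.card_image_of_injective _ hinj, add_zero]
    rfl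

lemma split3_sum {n : ℕ} (σ : Equiv.Perm (Fin n)) {d : ℕ} (hd : d ∈ desSet σ) (g : ℕ → ℕ) :
    ∑ i ∈ desSet σ, g i =
      ∑ i ∈ (desSet σ).filter (fun i => i + 1 < d + 1), g i + g d +
      ∑ i ∈ (desSet σ).filter (fun i => d + 1 ≤ i), g i := by
  have hs : (desSet σ).filter (fun i => i + 1 < d + 1) ∪
      ({d} ∪ (desSet σ).filter (fun i => d + 1 ≤ i)) = desSet σ := by
    ext x
    simp only [Finset.mem_union, Finset.mem_filter, Finset.mem_singleton]
    constructor
    · rintro ((⟨h, _⟩) | (h | ⟨h, _⟩))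
      · exact h
      · rw [h]; exact hd
      · exact h
    · intro hx
      rcases lt_trichotomy x d with h | h | h
      · exact Or.inl ⟨hx, by omega⟩
      · exact Or.inr (Or.inl h)
      · exact Or.inr (Or.inr ⟨hx, by omega⟩)
  have hd1 : Disjoint ({d} : Finset ℕ) ((desSet σ).filter (fun i => d + 1 ≤ i)) := by
    rw [Finset.disjoint_left]
    intro x hx hx2
    rw [Finset.mem_singleton] at hx
    have := (Finset.mem_filter.mp hx2).2
    omega
  have hd2 : Disjoint ((desSet σ).filter (fun i => i + 1 < d + 1))
      ({d} ∪ (desSet σ).filter (fun i => d + 1 ≤ i)) := by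
    rw [Finset.disjoint_left]
    intro x hx hx2
    have h1 := (Finset.mem_filter.mp hx).2
    rcases Finset.mem_union.mp hx2 with h | h
    · rw [Finset.mem_singleton] at h; omega
    · have := (Finset.mem_filter.mp h).2; omega
  conv_lhs => rw [← hs]
  rw [Finset.sum_union hd2, Finset.sum_union hd1, Finset.sum_singleton]
  omega

lemma stats_end {n : ℕ} (hn : 1 ≤ n) (σ : Equiv.Perm (Fin n)) :
    desSet (ins σ (Fin.last n)) = desSet σ := by
  rw [desSet_ins]
  have h1 : (desSet σ).filter (fun i => i + 1 < ((Fin.last n : Fin (n+1)):ℕ)) = desSet σ := by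
    apply Finset.filter_true_of_mem
    intro x hx
    have := (mem_desSet σ x).mp hx
    rw [Fin.val_last]
    omega
  have h2 : (desSet σ).filter (fun i => ((Fin.last n : Fin (n+1)):ℕ) ≤ i) = ∅ := by
    apply Finset.filter_false_of_mem
    intro x hx
    have := (mem_desSet σ x).mp hx
    rw [Fin.val_last]
    omega
  rw [h1, h2, Fin.val_last, if_neg (lt_irrefl n), Finset.image_empty, Finset.union_empty,
    Finset.union_empty]

lemma stats_desc {n : ℕ} (σ : Equiv.Perm (Fin n)) {d : ℕ} (hd : d ∈ desSet σ)
    (h : d + 1 < n + 1) :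
    des (ins σ ⟨d + 1, h⟩) = des σ ∧
    maj (ins σ ⟨d + 1, h⟩) = maj σ + 1 + ((desSet σ).filter (fun i => d + 1 ≤ i)).card := by
  have hdn : d < n - 1 := ((mem_desSet σ d).mp hd).1
  have hval : ((⟨d + 1, h⟩ : Fin (n+1)) : ℕ) = d + 1 := rfl
  have hDS := desSet_ins σ (⟨d + 1, h⟩ : Fin (n+1))
  rw [hval, if_pos (by omega : d + 1 < n)] at hDS
  have hinj : Function.Injective (· + 1 : ℕ → ℕ) := add_left_injective 1
  have hdisj1 : Disjoint ((desSet σ).filter (fun i => i + 1 < d + 1))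
      ((((desSet σ).filter (fun i => d + 1 ≤ i)).image (· + 1))) := by
    rw [Finset.disjoint_left]
    intro x hx hx2
    have h1 := (Finset.mem_filter.mp hx).2
    obtain ⟨a, ha, hax⟩ := Finset.mem_image.mp hx2
    have h2 := (Finset.mem_filter.mp ha).2
    have hax' : a + 1 = x := hax
    omega
  have hdisj2 : Disjoint (((desSet σ).filter (fun i => i + 1 < d + 1)) ∪
      (((desSet σ).filter (fun i => d + 1 ≤ i)).image (· + 1))) ({d + 1} : Finset ℕ) := by
    rw [Finset.disjoint_right]
    intro x hx hx2
    rw [Finset.mem_singleton] at hx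
    rcases Finset.mem_union.mp hx2 with h' | h'
    · have := (Finset.mem_filter.mp h').2; omega
    · obtain ⟨a, ha, hax⟩ := Finset.mem_image.mp h'
      have := (Finset.mem_filter.mp ha).2
      have hax' : a + 1 = x := hax
      omega
  constructor
  · rw [des, hDS, Finset.card_union_of_disjoint hdisj2, Finset.card_union_of_disjoint hdisj1,
      Finset.card_image_of_injective _ hinj, Finset.card_singleton]
    have hc := split3_sum σ hd (fun _ => 1)
    simp only [Finset.sum_const, smul_eq_mul, mul_one] at hc
    rw [des]
    omega
  · rw [maj, hDS, Finset.sum_union hdisj2, Finset.sum_union hdisj1, Finset.sum_singleton,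
      Finset.sum_image (fun x _ y _ h => hinj h)]
    have hm := split3_sum σ hd (fun i => i + 1)
    rw [maj]
    have hsum : ∑ i ∈ (desSet σ).filter (fun i => d + 1 ≤ i), (i + 1 + 1)
        = ∑ i ∈ (desSet σ).filter (fun i => d + 1 ≤ i), (i + 1)
          + ((desSet σ).filter (fun i => d + 1 ≤ i)).card := by
      rw [Finset.card_eq_sum_ones, ← Finset.sum_add_distrib]
    rw [hsum]
    omega

lemma stats_B {n : ℕ} (σ : Equiv.Perm (Fin n)) (p : Fin (n+1)) (hpn : (p:ℕ) < n)
    (hni : ∀ d ∈ desSet σ, d + 1 ≠ (p:ℕ)) :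
    des (ins σ p) = des σ + 1 ∧
    maj (ins σ p) = maj σ + ((desSet σ).filter (fun i => (p:ℕ) ≤ i)).card + (p:ℕ) + 1 := by
  have hDS := desSet_ins σ p
  rw [if_pos hpn] at hDS
  have hinj : Function.Injective (· + 1 : ℕ → ℕ) := add_left_injective 1
  have hf1 : (desSet σ).filter (fun i => i + 1 < (p:ℕ)) =
      (desSet σ).filter (fun i => ¬ (p:ℕ) ≤ i) := by
    apply Finset.filter_congr
    intro x hx
    have := hni x hx
    constructor
    · intro h'; omega
    · intro h'; omega
  have hdisj1 : Disjoint ((desSet σ).filter (fun i => i + 1 < (p:ℕ)))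
      ((((desSet σ).filter (fun i => (p:ℕ) ≤ i)).image (· + 1))) := by
    rw [Finset.disjoint_left]
    intro x hx hx2
    have h1 := (Finset.mem_filter.mp hx).2
    obtain ⟨a, ha, hax⟩ := Finset.mem_image.mp hx2
    have h2 := (Finset.mem_filter.mp ha).2
    have hax' : a + 1 = x := hax
    omega
  have hdisj2 : Disjoint (((desSet σ).filter (fun i => i + 1 < (p:ℕ))) ∪
      (((desSet σ).filter (fun i => (p:ℕ) ≤ i)).image (· + 1))) ({(p:ℕ)} : Finset ℕ) := by
    rw [Finset.disjoint_right]
    intro x hx hx2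
    rw [Finset.mem_singleton] at hx
    rcases Finset.mem_union.mp hx2 with h' | h'
    · have := (Finset.mem_filter.mp h').2; omega
    · obtain ⟨a, ha, hax⟩ := Finset.mem_image.mp h'
      have h2 := (Finset.mem_filter.mp ha).2
      have := hni a (Finset.mem_filter.mp ha).1
      have hax' : a + 1 = x := hax
      omega
  have hcsplit := Finset.card_filter_add_card_filter_not
    (s := desSet σ) (p := fun i => ¬ (p:ℕ) ≤ i)
  have heq2 : (desSet σ).filter (fun i => ¬ ¬ (p:ℕ) ≤ i) =
      (desSet σ).filter (fun i => (p:ℕ) ≤ i) := by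
    apply Finset.filter_congr
    intro x _
    exact not_not
  rw [heq2] at hcsplit
  have hssplit := Finset.sum_filter_add_sum_filter_not (desSet σ) (fun i => ¬ (p:ℕ) ≤ i)
    (fun i => i + 1)
  rw [heq2] at hssplit
  constructor
  · rw [des, hDS, Finset.card_union_of_disjoint hdisj2, Finset.card_union_of_disjoint hdisj1,
      Finset.card_image_of_injective _ hinj, Finset.card_singleton, hf1]
    rw [des]
    omega
  · rw [maj, hDS, Finset.sum_union hdisj2, Finset.sum_union hdisj1, Finset.sum_singleton,
      Finset.sum_image (fun x _ y _ h => hinj h), hf1]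
    have hsum : ∑ i ∈ (desSet σ).filter (fun i => (p:ℕ) ≤ i), (i + 1 + 1)
        = ∑ i ∈ (desSet σ).filter (fun i => (p:ℕ) ≤ i), (i + 1)
          + ((desSet σ).filter (fun i => (p:ℕ) ≤ i)).card := by
      rw [Finset.card_eq_sum_ones, ← Finset.sum_add_distrib]
    rw [hsum, maj]
    omega


def W (α : ℕ) {n : ℕ} (σ : Equiv.Perm (Fin n)) : K :=
  qq ^ ((1 + des σ - lrmin σ) * (α - 1) + maj σ) * qint α ^ lrmin σ

lemma des_le {n : ℕ} (σ : Equiv.Perm (Fin n)) : des σ ≤ n - 1 := by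
  have h := Finset.card_filter_le (Finset.range (n-1)) (fun i => pval σ (i + 1) < pval σ i)
  rw [Finset.card_range] at h
  exact h

lemma lrmin_le {n : ℕ} (σ : Equiv.Perm (Fin n)) : lrmin σ ≤ des σ + 1 := by
  have hsub : (Finset.range n).filter (fun i => ∀ j ∈ Finset.range i, pval σ i < pval σ j) ⊆
      insert 0 ((desSet σ).image (· + 1)) := by
    intro i hi
    obtain ⟨hin, hcond⟩ := (mem_lrset σ i).mp hi
    by_cases hi0 : i = 0
    · rw [hi0]; exact Finset.mem_insert_self 0 _
    · apply Finset.mem_insert_of_mem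
      apply Finset.mem_image.mpr
      refine ⟨i - 1, ?_, by omega⟩
      rw [mem_desSet]
      refine ⟨by omega, ?_⟩
      rw [show i - 1 + 1 = i by omega]
      exact hcond (i-1) (by omega)
  calc lrmin σ ≤ (insert 0 ((desSet σ).image (· + 1))).card := Finset.card_le_card hsub
    _ ≤ ((desSet σ).image (· + 1)).card + 1 := Finset.card_insert_le _ _
    _ ≤ des σ + 1 := by
        have := Finset.card_image_le (s := desSet σ) (f := (· + 1))
        rw [des]; omega

lemma W_end {n α : ℕ} (hn : 1 ≤ n) (σ : Equiv.Perm (Fin n)) :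
    W α (ins σ (Fin.last n)) = W α σ := by
  have hdes : des (ins σ (Fin.last n)) = des σ := by rw [des, stats_end hn σ]; rfl
  have hmaj : maj (ins σ (Fin.last n)) = maj σ := by rw [maj, stats_end hn σ]; rfl
  have hlr : lrmin (ins σ (Fin.last n)) = lrmin σ := by
    rw [lrmin_ins, Fin.val_last, if_neg (by omega), add_zero]
  rw [W, W, hdes, hmaj, hlr]

lemma W_desc {n α : ℕ} (σ : Equiv.Perm (Fin n)) {d : ℕ} (hd : d ∈ desSet σ)
    (h : d + 1 < n + 1) :
    W α (ins σ ⟨d + 1, h⟩) =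
      qq ^ (1 + ((desSet σ).filter (fun i => d + 1 ≤ i)).card) * W α σ := by
  obtain ⟨hdes, hmaj⟩ := stats_desc σ hd h
  have hlr : lrmin (ins σ ⟨d + 1, h⟩) = lrmin σ := by
    rw [lrmin_ins]
    have : ((⟨d + 1, h⟩ : Fin (n+1)) : ℕ) = d + 1 := rfl
    rw [this, if_neg (by omega), add_zero]
  rw [W, W, hdes, hmaj, hlr]
  set c := ((desSet σ).filter (fun i => d + 1 ≤ i)).card
  set X := (1 + des σ - lrmin σ) * (α - 1)
  rw [show X + (maj σ + 1 + c) = (1 + c) + (X + maj σ) by omega, pow_add]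
  ring

lemma W_B0 {n α : ℕ} (hn : 1 ≤ n) (σ : Equiv.Perm (Fin n)) (p : Fin (n+1))
    (hp0 : (p:ℕ) = 0) :
    W α (ins σ p) = qq ^ (des σ + 1) * (qint α * W α σ) := by
  obtain ⟨hdes, hmaj⟩ := stats_B σ p (by omega) (fun d hd => by omega)
  have hfil : (desSet σ).filter (fun i => (p:ℕ) ≤ i) = desSet σ :=
    Finset.filter_true_of_mem (fun x _ => by omega)
  rw [hfil] at hmaj
  have hlr : lrmin (ins σ p) = lrmin σ + 1 := by rw [lrmin_ins, if_pos hp0]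
  rw [W, W, hdes, hmaj, hlr, hp0]
  rw [show 1 + (des σ + 1) - (lrmin σ + 1) = 1 + des σ - lrmin σ by omega]
  rw [show (desSet σ).card = des σ from rfl]
  set X := (1 + des σ - lrmin σ) * (α - 1)
  rw [pow_succ, show X + (maj σ + des σ + 0 + 1) = (des σ + 1) + (X + maj σ) by omega, pow_add]
  ring

lemma W_Basc {n α : ℕ} (hα : 1 ≤ α) (σ : Equiv.Perm (Fin n)) (p : Fin (n+1))
    (hp1 : 1 ≤ (p:ℕ)) (hpn : (p:ℕ) < n) (hni : ∀ d ∈ desSet σ, d + 1 ≠ (p:ℕ)) :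
    W α (ins σ p) =
      qq ^ ((α - 1) + ((p:ℕ) + 1) + ((desSet σ).filter (fun i => (p:ℕ) ≤ i)).card) * W α σ := by
  obtain ⟨hdes, hmaj⟩ := stats_B σ p hpn hni
  have hlr : lrmin (ins σ p) = lrmin σ := by rw [lrmin_ins, if_neg (by omega), add_zero]
  have hll := lrmin_le σ
  rw [W, W, hdes, hmaj, hlr]
  rw [show 1 + (des σ + 1) - lrmin σ = (1 + des σ - lrmin σ) + 1 by omega, add_mul, one_mul]
  set c := ((desSet σ).filter (fun i => (p:ℕ) ≤ i)).card
  set X := (1 + des σ - lrmin σ) * (α - 1)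
  rw [show X + (α - 1) + (maj σ + c + (p:ℕ) + 1) = ((α - 1) + ((p:ℕ) + 1) + c) + (X + maj σ)
    by omega, pow_add]
  ring


lemma qpow_sum (a m : ℕ) : ∑ t ∈ Finset.range m, qq ^ (a + t) = qq ^ a * qint m := by
  rw [qint, Finset.mul_sum]
  exact Finset.sum_congr rfl fun t _ => pow_add qq a t

lemma qint_succ' {c : ℕ} (hc : 1 ≤ c) : qint c = 1 + qq * qint (c - 1) := by
  conv_lhs => rw [show c = 1 + (c - 1) by omega]
  rw [qint_add, qint_one, pow_one]

def Fins (α : ℕ) {n : ℕ} (σ : Equiv.Perm (Fin n)) (k : ℕ) (i : ℕ) : K :=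
  if h : i < n + 1 then (if des (ins σ ⟨i, h⟩) = k then W α (ins σ ⟨i, h⟩) else 0) else 0

lemma insSum {n α : ℕ} (hn : 1 ≤ n) (hα : 1 ≤ α) (σ : Equiv.Perm (Fin n)) (k : ℕ) :
    ∑ p : Fin (n+1), (if des (ins σ p) = k then W α (ins σ p) else 0) =
      (if des σ = k then qint (k+1) * W α σ else 0) +
      (if des σ + 1 = k then qq ^ k * qint (n - k + α) * W α σ else 0) := by
  classical
  set D := desSet σ with hD
  set img := D.image (· + 1) with himg
  set B := Finset.range n \ img with hB
  have himgsub : img ⊆ Finset.range n := by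
    intro x hx
    obtain ⟨d, hd, rfl⟩ := Finset.mem_image.mp hx
    have := ((mem_desSet σ d).mp hd).1
    rw [Finset.mem_range]
    omega
  -- convert to sum over range (n+1)
  have hstep1 : ∑ p : Fin (n+1), (if des (ins σ p) = k then W α (ins σ p) else 0) =
      ∑ i ∈ Finset.range (n+1), Fins α σ k i := by
    rw [← Fin.sum_univ_eq_sum_range (Fins α σ k)]
    apply Finset.sum_congr rfl
    intro p _
    rw [Fins, dif_pos p.isLt]
  rw [hstep1]
  rw [Finset.range_add_one, Finset.sum_insert Finset.notMem_range_self]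
  have hFn : Fins α σ k n = if des σ = k then W α σ else 0 := by
    rw [Fins, dif_pos (by omega : n < n + 1)]
    have hlast : (⟨n, by omega⟩ : Fin (n+1)) = Fin.last n := rfl
    rw [hlast, W_end hn σ, show des (ins σ (Fin.last n)) = des σ from by
      unfold des; rw [stats_end hn σ]]
  have hsplit : ∑ i ∈ Finset.range n, Fins α σ k i =
      ∑ i ∈ B, Fins α σ k i + ∑ i ∈ img, Fins α σ k i :=
    (Finset.sum_sdiff himgsub).symm
  rw [hFn, hsplit]
  have hinj : Function.Injective (· + 1 : ℕ → ℕ) := add_left_injective 1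
  -- image sum
  have himgsum : ∑ i ∈ img, Fins α σ k i =
      ∑ d ∈ D, (if des σ = k then qq ^ (1 + (D.filter (fun i => d + 1 ≤ i)).card) * W α σ
        else 0) := by
    rw [himg, Finset.sum_image (fun x _ y _ h => hinj h)]
    apply Finset.sum_congr rfl
    intro d hd
    have hdn : d < n - 1 := ((mem_desSet σ d).mp hd).1
    have hdlt : d + 1 < n + 1 := by omega
    rw [Fins, dif_pos hdlt, (stats_desc σ hd hdlt).1, W_desc σ hd hdlt]
  -- B sum termwise
  have hBsum : ∀ p ∈ B, Fins α σ k p =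
      (if des σ + 1 = k then
        (if p = 0 then qq ^ (des σ + 1) * (qint α * W α σ)
         else qq ^ ((α - 1) + (p + 1) + (D.filter (fun i => p ≤ i)).card) * W α σ)
       else 0) := by
    intro p hp
    have hpn : p < n := by
      have := (Finset.mem_sdiff.mp hp).1; exact Finset.mem_range.mp this
    have hnotimg := (Finset.mem_sdiff.mp hp).2
    have hni : ∀ d ∈ desSet σ, d + 1 ≠ p := by
      intro d hd heq
      exact hnotimg (Finset.mem_image.mpr ⟨d, hd, heq⟩)
    have hplt : p < n + 1 := by omega
    have hval : ((⟨p, hplt⟩ : Fin (n+1)) : ℕ) = p := rfl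
    rw [Fins, dif_pos hplt, (stats_B σ ⟨p, hplt⟩ (by rw [hval]; exact hpn)
      (by rw [hval]; exact hni)).1]
    by_cases hk2 : des σ + 1 = k
    · rw [if_pos hk2, if_pos hk2]
      by_cases hp0 : p = 0
      · rw [if_pos hp0, W_B0 hn σ ⟨p, hplt⟩ (by rw [hval]; exact hp0)]
      · rw [if_neg hp0, W_Basc hα σ ⟨p, hplt⟩ (by rw [hval]; omega)
          (by rw [hval]; exact hpn) (by rw [hval]; exact hni), hval]
    · rw [if_neg hk2, if_neg hk2]
  by_cases hk1 : des σ = k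
  · -- descent-preserving case
    have hk2 : ¬ (des σ + 1 = k) := by omega
    have hB0 : ∑ i ∈ B, Fins α σ k i = 0 := by
      apply Finset.sum_eq_zero
      intro p hp
      rw [hBsum p hp, if_neg hk2]
    rw [hB0, zero_add, himgsum]
    have hDes : des σ = D.card := rfl
    have himgval : ∑ d ∈ D, (if des σ = k then
        qq ^ (1 + (D.filter (fun i => d + 1 ≤ i)).card) * W α σ else 0) =
        (∑ t ∈ Finset.range D.card, qq ^ ((D.card - 1 - t) + 1)) * W α σ := by
      rw [← rank_sum D (fun t => qq ^ ((D.card - 1 - t) + 1)), Finset.sum_mul]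
      apply Finset.sum_congr rfl
      intro d hd
      rw [if_pos hk1]
      show qq ^ (1 + (D.filter (fun i => d + 1 ≤ i)).card) * W α σ =
        qq ^ ((D.card - 1 - (D.filter (· < d)).card) + 1) * W α σ
      congr 2
      have hcards := split3_sum σ hd (fun _ => 1)
      simp only [Finset.sum_const, smul_eq_mul, mul_one] at hcards
      have hfc : ((desSet σ).filter (fun i => i + 1 < d + 1)).card =
          ((desSet σ).filter (· < d)).card := by
        congr 1
        apply Finset.filter_congr
        intro x _
        constructor
        · intro h'; omega
        · intro h'; omega
      rw [hfc] at hcards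
      have hkey : (D.filter (· < d)).card + 1 + (D.filter (fun i => d + 1 ≤ i)).card
          = D.card := by
        rw [hD]
        omega
      omega
    rw [himgval, Finset.sum_range_reflect (fun t => qq ^ (t + 1)) D.card]
    rw [if_pos hk1, if_neg hk2, add_zero, if_pos hk1, ← hk1, hDes]
    have hq : qint (D.card + 1) = ∑ t ∈ Finset.range D.card, qq ^ (t + 1) + 1 := by
      rw [qint, Finset.sum_range_succ' (fun i => qq ^ i) D.card, pow_zero]
    rw [hq]
    ring
  · rw [if_neg hk1]
    by_cases hk2 : des σ + 1 = k
    · -- descent-increasing case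
      rw [if_pos hk2, zero_add, himgsum]
      have himg0 : ∑ d ∈ D, (if des σ = k then
          qq ^ (1 + (D.filter (fun i => d + 1 ≤ i)).card) * W α σ else 0) = 0 :=
        Finset.sum_eq_zero fun d _ => if_neg hk1
      rw [himg0, add_zero, if_neg hk1, zero_add]
      have h0B : 0 ∈ B := by
        rw [hB, Finset.mem_sdiff]
        refine ⟨Finset.mem_range.mpr (by omega), ?_⟩
        intro h0
        obtain ⟨d, _, hd1⟩ := Finset.mem_image.mp h0
        omega
      have herase : ∀ p ∈ B.erase 0, (if des σ + 1 = k then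
          (if p = 0 then qq ^ (des σ + 1) * (qint α * W α σ)
           else qq ^ ((α - 1) + (p + 1) + (D.filter (fun i => p ≤ i)).card) * W α σ)
         else 0) = qq ^ ((α + des σ) + (B.filter (· < p)).card) * W α σ := by
        intro p hp
        have hp0 : p ≠ 0 := (Finset.mem_erase.mp hp).1
        have hpB : p ∈ B := (Finset.mem_erase.mp hp).2
        rw [if_pos hk2, if_neg hp0]
        congr 2
        have hrk := rank_B D (by
          intro x hx
          exact Finset.mem_range.mpr ((mem_desSet σ x).mp hx).1) (p := p) (by
          rw [hB] at hpB; exact hpB)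
        rw [← hB] at hrk
        have hDcard : D.card = des σ := rfl
        omega
      rw [Finset.sum_congr rfl hBsum, ← Finset.add_sum_erase B _ h0B, if_pos hk2, if_pos rfl,
        Finset.sum_congr rfl herase]
      have hBcard : B.card = n - des σ := by
        rw [hB, Finset.card_sdiff_of_subset himgsub, Finset.card_range, himg,
          Finset.card_image_of_injective _ hinj]
        rfl
      have hrank := rank_sum B (fun t => qq ^ ((α + des σ) + t) * W α σ)
      have h0B' := Finset.add_sum_erase B
        (fun p => qq ^ ((α + des σ) + (B.filter (· < p)).card) * W α σ) h0B
      have hfilter0 : B.filter (· < 0) = ∅ :=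
        Finset.filter_false_of_mem (fun x _ => by omega)
      have hSe : ∑ p ∈ B.erase 0, qq ^ ((α + des σ) + (B.filter (· < p)).card) * W α σ =
          ∑ t ∈ Finset.range B.card, qq ^ ((α + des σ) + t) * W α σ
            - qq ^ (α + des σ) * W α σ := by
        have hf0 : qq ^ ((α + des σ) + (B.filter (· < 0)).card) * W α σ
            = qq ^ (α + des σ) * W α σ := by
          rw [hfilter0, Finset.card_empty, add_zero]
        linear_combination h0B' + hrank - hf0
      rw [hSe, hBcard]
      have hgeo : ∑ t ∈ Finset.range (n - des σ), qq ^ ((α + des σ) + t) * W α σ =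
          (qq ^ (α + des σ) * qint (n - des σ)) * W α σ := by
        rw [← Finset.sum_mul, qpow_sum]
      have hc : 1 ≤ n - des σ := by
        have := des_le σ
        omega
      rw [hgeo, ← hk2, qint_succ' hc,
        show n - (des σ + 1) + α = α + (n - des σ - 1) by omega, qint_add]
      ring
    · rw [if_neg hk2, himgsum]
      have himg0 : ∑ d ∈ D, (if des σ = k then
          qq ^ (1 + (D.filter (fun i => d + 1 ≤ i)).card) * W α σ else 0) = 0 :=
        Finset.sum_eq_zero fun d _ => if_neg hk1
      have hB0 : ∑ i ∈ B, Fins α σ k i = 0 := by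
        apply Finset.sum_eq_zero
        intro p hp
        rw [hBsum p hp, if_neg hk2]
      rw [himg0, hB0, if_neg hk1]
      simp


def Psum (n α k : ℕ) : K := ∑ σ : Equiv.Perm (Fin n), (if des σ = k then W α σ else 0)

lemma Prec {n α : ℕ} (hn : 1 ≤ n) (hα : 1 ≤ α) (k : ℕ) :
    Psum (n+1) α k = qint (k+1) * Psum n α k +
      (if 1 ≤ k then qq ^ k * qint (n - k + α) * Psum n α (k-1) else 0) := by
  have hb : Psum (n+1) α k =
      ∑ x : Equiv.Perm (Fin n) × Fin (n+1),
        (if des (ins x.1 x.2) = k then W α (ins x.1 x.2) else 0) := by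
    rw [Psum]
    exact (Fintype.sum_bijective _ (ins_bijective n)
      (fun x : Equiv.Perm (Fin n) × Fin (n+1) =>
        if des (ins x.1 x.2) = k then W α (ins x.1 x.2) else 0)
      (fun τ => if des τ = k then W α τ else 0) (fun x => rfl)).symm
  rw [hb, Fintype.sum_prod_type]
  rw [Finset.sum_congr rfl (fun σ _ => insSum hn hα σ k), Finset.sum_add_distrib]
  congr 1
  · rw [Psum, Finset.mul_sum]
    exact Finset.sum_congr rfl fun σ _ => by rw [mul_ite, mul_zero]
  · by_cases hk : 1 ≤ k
    · rw [if_pos hk, Psum, Finset.mul_sum]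
      apply Finset.sum_congr rfl
      intro σ _
      by_cases hd : des σ + 1 = k
      · rw [if_pos hd, if_pos (show des σ = k - 1 by omega)]
      · rw [if_neg hd, if_neg (show ¬ des σ = k - 1 by omega), mul_zero]
    · rw [if_neg hk]
      apply Finset.sum_eq_zero
      intro σ _
      rw [if_neg (by omega)]

lemma P_eq {α : ℕ} (hα : 1 ≤ α) : ∀ n, 1 ≤ n → ∀ k, Psum n α k = qint α * E α 1 (n-1) k := by
  intro n hn
  induction n, hn using Nat.le_induction with
  | base =>
    intro k
    have huniq : ∀ σ : Equiv.Perm (Fin 1), σ = 1 := fun σ => Equiv.ext fun x =>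
      Subsingleton.elim _ _
    rw [Psum, Fintype.sum_eq_single (1 : Equiv.Perm (Fin 1))
      (fun σ hσ => absurd (huniq σ) hσ)]
    have hdes : des (1 : Equiv.Perm (Fin 1)) = 0 := rfl
    have hmaj : maj (1 : Equiv.Perm (Fin 1)) = 0 := rfl
    have hlr : lrmin (1 : Equiv.Perm (Fin 1)) = 1 := by
      rw [lrmin]
      rw [show (Finset.range 1) = {0} from rfl]
      rw [Finset.filter_singleton, if_pos]
      · rfl
      · intro j hj
        simp at hj
    have hW : W α (1 : Equiv.Perm (Fin 1)) = qint α := by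
      rw [W, hdes, hmaj, hlr, show (1 + 0 - 1) * (α - 1) + 0 = 0 by omega, pow_zero,
        one_mul, pow_one]
    rw [hW, show (1 : ℕ) - 1 = 0 from rfl, E_zero, hdes]
    by_cases hk : k = 0
    · rw [if_pos (by omega : (0:ℕ) = k), if_pos hk, mul_one]
    · rw [if_neg (by omega : ¬ (0:ℕ) = k), if_neg hk, mul_zero]
  | succ n hn ih =>
    intro k
    obtain ⟨m, rfl⟩ : ∃ m, n = m + 1 := ⟨n - 1, by omega⟩
    have hm1 : (m + 1 + 1 : ℕ) - 1 = m + 1 := rfl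
    rw [hm1]
    match k with
    | 0 =>
      rw [Prec (by omega) hα 0, if_neg (by omega), add_zero, ih 0, E_succ_zero, qint_one,
        show (m + 1 : ℕ) - 1 = m from rfl]
      ring
    | (j+1) =>
      rw [Prec (by omega) hα (j+1), if_pos (by omega), show (j + 1 : ℕ) - 1 = j from rfl,
        ih (j+1), ih j, show (m + 1 : ℕ) - 1 = m from rfl,
        E_succ_succ α 1 m j,
        show (m + 1) - (j + 1) = m - j by omega, show (1 : ℕ) + j = j + 1 by omega]
      ring


theorem alpha_carlitz (n α : ℕ) (hn : 1 ≤ n) (hα : 1 ≤ α) :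
    (∑ σ : Equiv.Perm (Fin n),
        PowerSeries.C (R := K) (qq ^ ((1 + des σ - lrmin σ) * (α - 1) + maj σ) * qint α ^ lrmin σ) *
          PowerSeries.X ^ des σ) * (poch (n + α))⁻¹ =
      PowerSeries.mk (fun j => qbinom (j + α) (j + 1) * qint (j + 1) ^ n) := by
  obtain ⟨m, rfl⟩ : ∃ m, n = m + 1 := ⟨n - 1, by omega⟩
  rw [poch_inv (show 1 ≤ m + 1 + α by omega)]
  ext j
  rw [PowerSeries.coeff_mk, Finset.sum_mul, map_sum]
  have hterm : ∀ σ : Equiv.Perm (Fin (m+1)),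
      (PowerSeries.coeff (R := K) j) (PowerSeries.C (R := K)
          (qq ^ ((1 + des σ - lrmin σ) * (α - 1) + maj σ) * qint α ^ lrmin σ) *
        PowerSeries.X ^ des σ * Gser (m + 1 + α)) =
      W α σ * (if des σ ≤ j then qbinom (j - des σ + m + α) (j - des σ) else 0) := by
    intro σ
    rw [mul_assoc, PowerSeries.coeff_C_mul, PowerSeries.coeff_X_pow_mul', ← W]
    congr 1
    by_cases h : des σ ≤ j
    · rw [if_pos h, if_pos h, Gser, PowerSeries.coeff_mk,
        show j - des σ + (m + 1 + α) - 1 = j - des σ + m + α by omega]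
    · rw [if_neg h, if_neg h]
  rw [Finset.sum_congr rfl (fun σ _ => hterm σ)]
  have hmaps : ∀ σ : Equiv.Perm (Fin (m+1)), σ ∈ (Finset.univ : Finset (Equiv.Perm (Fin (m+1)))) →
      des σ ∈ Finset.range (m+1) := by
    intro σ _
    rw [Finset.mem_range]
    have := des_le σ
    omega
  rw [← Finset.sum_fiberwise_of_maps_to hmaps
    (fun σ => W α σ * (if des σ ≤ j then qbinom (j - des σ + m + α) (j - des σ) else 0))]
  have hfiber : ∀ k ∈ Finset.range (m+1),
      ∑ σ ∈ Finset.univ.filter (fun σ : Equiv.Perm (Fin (m+1)) => des σ = k),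
        (W α σ * (if des σ ≤ j then qbinom (j - des σ + m + α) (j - des σ) else 0)) =
      (if k ≤ j then qint α * E α 1 m k * qbinom (j - k + m + α) (j - k) else 0) := by
    intro k _
    have hcongr : ∀ σ ∈ Finset.univ.filter (fun σ : Equiv.Perm (Fin (m+1)) => des σ = k),
        (W α σ * (if des σ ≤ j then qbinom (j - des σ + m + α) (j - des σ) else 0)) =
        W α σ * (if k ≤ j then qbinom (j - k + m + α) (j - k) else 0) := by
      intro σ hσ
      rw [(Finset.mem_filter.mp hσ).2]
    rw [Finset.sum_congr rfl hcongr, ← Finset.sum_mul, Finset.sum_filter,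
      show (∑ σ : Equiv.Perm (Fin (m+1)), if des σ = k then W α σ else 0) = Psum (m+1) α k
        from rfl,
      P_eq hα (m+1) (by omega) k, show (m + 1 : ℕ) - 1 = m from rfl, mul_ite, mul_zero]
  rw [Finset.sum_congr rfl hfiber]
  rw [key_id α hα m j]
  -- both sides equal a common extended sum
  set g : ℕ → K := fun k =>
    if k ≤ j then qint α * E α 1 m k * qbinom (j - k + m + α) (j - k) else 0 with hg
  have hgz : ∀ k, m < k → g k = 0 := by
    intro k hk
    simp only [hg]
    by_cases hkj : k ≤ j
    · simp only [if_pos hkj, E_vanish α 1 m k hk, mul_zero, zero_mul]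
    · rw [if_neg hkj]
  have h1 : ∑ k ∈ Finset.range (m+1), g k = ∑ k ∈ Finset.range (m + j + 2), g k := by
    apply Finset.sum_subset (Finset.range_subset_range.mpr (by omega))
    intro k _ hk
    exact hgz k (by simp only [Finset.mem_range, not_lt] at hk; omega)
  have h2 : qint α * ∑ k ∈ Finset.range (j + 1), E α 1 m k * qbinom (j - k + m + α) (j - k) =
      ∑ k ∈ Finset.range (m + j + 2), g k := by
    rw [Finset.mul_sum]
    have h3 : ∀ k ∈ Finset.range (j+1),
        qint α * (E α 1 m k * qbinom (j - k + m + α) (j - k)) = g k := by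
      intro k hk
      simp only [hg]
      rw [if_pos (by simp only [Finset.mem_range] at hk; omega : k ≤ j), mul_assoc]
    rw [Finset.sum_congr rfl h3]
    apply Finset.sum_subset (Finset.range_subset_range.mpr (by omega))
    intro k _ hk
    rw [if_neg (by simp only [Finset.mem_range, not_lt] at hk; omega : ¬ k ≤ j)]
  rw [h2]
  exact h1

end
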